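/- arXiv:2502.09514 — 2 statements merged into one kernel-verified Lean document; each statement's English description precedes it below -/
import Mathlib

section
/- Analytic core of the quantum Cohn–Elkies bound (Theorem 1): Let N ≥ 1 be an integer, d > 0, c > 0, and M ∈ ℝ. Let a, f : ℝ^{2N} → ℝ be even integrable functions with a(x) ≥ 0 for all x. Assume: (i) â(x) ≥ 0 for all x ∈ ℝ^{2N}; (ii) c·â(x) ≤ a(x) whenever ‖x‖ < d; (iii) f̂(x) ≥ 0 for all x ∈ ℝ^{2N}; (iv) f(x) ≥ 0 whenever ‖x‖ < d and f(x) ≤ 0 whenever ‖x‖ ≥ d; (v) ∫_{‖x‖<d} f̂(x)·a(x) dx > 0; (vi) f(x) ≤ M·f̂(x) for all x with ‖x‖ ≤ d. Then c ≤ M. -/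
open MeasureTheory Real
open scoped RealInnerProductSpace

/-- The Fourier transform of an even integrable function `h : ℝ^{2N} → ℝ`,
`ĥ(y) = (2π)^{-N} ∫ cos⟨y,x⟩ h(x) dx`. -/
noncomputable def fourierCos (N : ℕ) (h : EuclideanSpace ℝ (Fin (2 * N)) → ℝ)
    (y : EuclideanSpace ℝ (Fin (2 * N))) : ℝ :=
  (1 / (2 * π) ^ N) * ∫ x : EuclideanSpace ℝ (Fin (2 * N)), Real.cos ⟪y, x⟫ * h x

section aux
variable {N : ℕ}

lemma fourierCos_continuous (h : EuclideanSpace ℝ (Fin (2 * N)) → ℝ) (hi : Integrable h) :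
    Continuous (fourierCos N h) := by
  unfold fourierCos
  refine continuous_const.mul ?_
  refine continuous_of_dominated (F := fun y x => Real.cos ⟪y, x⟫ * h x)
    (bound := fun x => |h x|) (fun y => ?_) ?_ ?_ ?_
  · exact ((Real.continuous_cos.comp (continuous_const.inner continuous_id)).aestronglyMeasurable).mul hi.1
  · intro y
    filter_upwards with x
    rw [Real.norm_eq_abs, abs_mul]
    calc |Real.cos ⟪y, x⟫| * |h x| ≤ 1 * |h x| :=
          mul_le_mul_of_nonneg_right (Real.abs_cos_le_one _) (abs_nonneg _)
      _ = |h x| := one_mul _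
  · exact hi.abs
  · filter_upwards with x
    exact (Real.continuous_cos.comp (continuous_id.inner continuous_const)).mul continuous_const

lemma fourierCos_bound (h : EuclideanSpace ℝ (Fin (2 * N)) → ℝ) (hi : Integrable h) :
    ∃ C, ∀ y, ‖fourierCos N h y‖ ≤ C := by
  refine ⟨(1 / (2 * π) ^ N) * ∫ x, ‖h x‖, fun y => ?_⟩
  have h1 : (0:ℝ) ≤ 1 / (2 * π) ^ N := by positivity
  rw [fourierCos, norm_mul, Real.norm_eq_abs (1 / (2 * π) ^ N), abs_of_nonneg h1]
  refine mul_le_mul_of_nonneg_left ?_ h1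
  calc ‖∫ x, Real.cos ⟪y, x⟫ * h x‖ ≤ ∫ x, ‖Real.cos ⟪y, x⟫ * h x‖ :=
        norm_integral_le_integral_norm _
    _ ≤ ∫ x, ‖h x‖ := by
        refine integral_mono_of_nonneg (Filter.Eventually.of_forall fun x => norm_nonneg _)
          hi.norm (Filter.Eventually.of_forall fun x => ?_)
        show ‖Real.cos ⟪y, x⟫ * h x‖ ≤ ‖h x‖
        rw [norm_mul]
        calc ‖Real.cos ⟪y, x⟫‖ * ‖h x‖ ≤ 1 * ‖h x‖ :=
              mul_le_mul_of_nonneg_right (Real.abs_cos_le_one _) (norm_nonneg _)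
          _ = ‖h x‖ := one_mul _

lemma fourierCos_parseval (f a : EuclideanSpace ℝ (Fin (2 * N)) → ℝ)
    (hf : Integrable f) (ha : Integrable a) :
    ∫ y, fourierCos N f y * a y = ∫ x, f x * fourierCos N a x := by
  have hb : Integrable (fun z : EuclideanSpace ℝ (Fin (2 * N)) × EuclideanSpace ℝ (Fin (2 * N)) =>
      a z.1 * f z.2) (volume.prod volume) := ha.mul_prod hf
  have hcos : Continuous fun z : EuclideanSpace ℝ (Fin (2 * N)) × EuclideanSpace ℝ (Fin (2 * N)) =>
      Real.cos ⟪z.1, z.2⟫ :=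
    Real.continuous_cos.comp (continuous_fst.inner continuous_snd)
  have key : Integrable (fun z : EuclideanSpace ℝ (Fin (2 * N)) × EuclideanSpace ℝ (Fin (2 * N)) =>
      Real.cos ⟪z.1, z.2⟫ * (a z.1 * f z.2)) (volume.prod volume) :=
    hb.bdd_mul (c := 1) hcos.aestronglyMeasurable (Filter.Eventually.of_forall fun z => Real.abs_cos_le_one _)
  have swap := integral_integral_swap
    (f := fun y x : EuclideanSpace ℝ (Fin (2 * N)) => Real.cos ⟪y, x⟫ * (a y * f x)) key
  have h1 : ∀ y, fourierCos N f y * a y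
      = (1 / (2 * π) ^ N) * ∫ x, Real.cos ⟪y, x⟫ * (a y * f x) := by
    intro y
    unfold fourierCos
    rw [mul_assoc, ← integral_mul_const]
    congr 1
    have e : ∀ x, (Real.cos ⟪y, x⟫ * f x) * a y = Real.cos ⟪y, x⟫ * (a y * f x) := by
      intro x; ring
    simp_rw [e]
  have h2 : ∀ x, f x * fourierCos N a x
      = (1 / (2 * π) ^ N) * ∫ y, Real.cos ⟪y, x⟫ * (a y * f x) := by
    intro x
    unfold fourierCos
    rw [mul_comm (f x), mul_assoc, ← integral_mul_const]
    congr 1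
    have e : ∀ y, (Real.cos ⟪x, y⟫ * a y) * f x = Real.cos ⟪y, x⟫ * (a y * f x) := by
      intro y; rw [real_inner_comm]; ring
    simp_rw [e]
  simp_rw [h1, h2]
  rw [integral_const_mul, integral_const_mul, swap]

lemma continuous_integrableOn_ball {g : EuclideanSpace ℝ (Fin (2 * N)) → ℝ}
    (hg : Continuous g) (d : ℝ) :
    IntegrableOn g (Metric.ball (0 : EuclideanSpace ℝ (Fin (2 * N))) d) := by
  exact ((hg.locallyIntegrable).integrableOn_isCompact
    (isCompact_closedBall 0 d)).mono_set Metric.ball_subset_closedBall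

end aux

/-- Analytic core of the quantum Cohn–Elkies bound (Theorem 1). -/
theorem quantum_cohn_elkies (N : ℕ) (hN : 1 ≤ N) (d c M : ℝ) (hd : 0 < d) (hc : 0 < c)
    (a f : EuclideanSpace ℝ (Fin (2 * N)) → ℝ)
    (ha_even : ∀ x, a (-x) = a x) (hf_even : ∀ x, f (-x) = f x)
    (ha_int : Integrable a) (hf_int : Integrable f)
    (ha_nonneg : ∀ x, 0 ≤ a x)
    (ha_hat_nonneg : ∀ x, 0 ≤ fourierCos N a x)
    (h_code : ∀ x, ‖x‖ < d → c * fourierCos N a x ≤ a x)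
    (hf_hat_nonneg : ∀ x, 0 ≤ fourierCos N f x)
    (hf_pos : ∀ x, ‖x‖ < d → 0 ≤ f x)
    (hf_neg : ∀ x, d ≤ ‖x‖ → f x ≤ 0)
    (h_int_pos :
      0 < ∫ x in {x : EuclideanSpace ℝ (Fin (2 * N)) | ‖x‖ < d}, fourierCos N f x * a x)
    (hM : ∀ x, ‖x‖ ≤ d → f x ≤ M * fourierCos N f x) :
    c ≤ M := by
  have hSset : {x : EuclideanSpace ℝ (Fin (2 * N)) | ‖x‖ < d}
      = Metric.ball (0 : EuclideanSpace ℝ (Fin (2 * N))) d := by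
    ext x; simp [Metric.mem_ball, dist_zero_right]
  set S := Metric.ball (0 : EuclideanSpace ℝ (Fin (2 * N))) d with hS
  have hSmeas : MeasurableSet S := measurableSet_ball
  have hmemS : ∀ x : EuclideanSpace ℝ (Fin (2 * N)), x ∈ S → ‖x‖ < d := by
    intro x hx
    rw [hS, Metric.mem_ball, dist_zero_right] at hx
    exact hx
  have hfhat_cont : Continuous (fourierCos N f) := fourierCos_continuous f hf_int
  have hahat_cont : Continuous (fourierCos N a) := fourierCos_continuous a ha_int
  -- global integrability of f̂·a and f·â
  have hfa : Integrable (fun y => fourierCos N f y * a y) :=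
    ha_int.bdd_mul hfhat_cont.aestronglyMeasurable (Filter.Eventually.of_forall (fourierCos_bound f hf_int).choose_spec)
  have hfahat : Integrable (fun x => f x * fourierCos N a x) := by
    have := hf_int.bdd_mul hahat_cont.aestronglyMeasurable (Filter.Eventually.of_forall (fourierCos_bound a ha_int).choose_spec)
    simpa [mul_comm] using this
  -- key quantities
  set J := ∫ x in S, fourierCos N f x * fourierCos N a x with hJ
  set I := ∫ x in S, fourierCos N f x * a x with hI
  have hIpos : 0 < I := by rwa [hSset] at h_int_pos
  have hJ0 : 0 ≤ J :=
    setIntegral_nonneg hSmeas fun x _ => mul_nonneg (hf_hat_nonneg x) (ha_hat_nonneg x)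
  have hhats_int : IntegrableOn (fun x => fourierCos N f x * fourierCos N a x) S :=
    continuous_integrableOn_ball (hfhat_cont.mul hahat_cont) d
  -- step 1 : c * J ≤ I
  have step1 : c * J ≤ I := by
    rw [hJ, ← integral_const_mul]
    refine setIntegral_mono_on (hhats_int.const_mul c) hfa.integrableOn hSmeas ?_
    intro x hx
    calc c * (fourierCos N f x * fourierCos N a x)
        = fourierCos N f x * (c * fourierCos N a x) := by ring
      _ ≤ fourierCos N f x * a x :=
          mul_le_mul_of_nonneg_left (h_code x (hmemS x hx)) (hf_hat_nonneg x)
  -- step 2 : I ≤ ∫ f̂·a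
  have step2 : I ≤ ∫ y, fourierCos N f y * a y :=
    setIntegral_le_integral hfa
      (Filter.Eventually.of_forall fun x => mul_nonneg (hf_hat_nonneg x) (ha_nonneg x))
  -- step 3 : Parseval
  have step3 : (∫ y, fourierCos N f y * a y) = ∫ x, f x * fourierCos N a x :=
    fourierCos_parseval f a hf_int ha_int
  -- step 4 : ∫ f·â ≤ ∫_S f·â
  have step4 : (∫ x, f x * fourierCos N a x) ≤ ∫ x in S, f x * fourierCos N a x := by
    have hsplit := integral_add_compl hSmeas hfahat
    have hneg : (∫ x in Sᶜ, f x * fourierCos N a x) ≤ 0 := by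
      refine setIntegral_nonpos hSmeas.compl fun x hx => ?_
      have hxd : d ≤ ‖x‖ := by
        by_contra h
        refine hx ?_
        rw [hS, Metric.mem_ball, dist_zero_right]
        exact lt_of_not_ge h
      exact mul_nonpos_of_nonpos_of_nonneg (hf_neg x hxd) (ha_hat_nonneg x)
    linarith
  -- step 5 : ∫_S f·â ≤ M * J
  have step5 : (∫ x in S, f x * fourierCos N a x) ≤ M * J := by
    rw [hJ, ← integral_const_mul]
    refine setIntegral_mono_on hfahat.integrableOn (hhats_int.const_mul M) hSmeas ?_
    intro x hx
    calc f x * fourierCos N a x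
        ≤ (M * fourierCos N f x) * fourierCos N a x :=
          mul_le_mul_of_nonneg_right (hM x (le_of_lt (hmemS x hx))) (ha_hat_nonneg x)
      _ = M * (fourierCos N f x * fourierCos N a x) := by ring
  have hMJ : I ≤ M * J := by linarith
  have hJpos : 0 < J := by
    rcases hJ0.lt_or_eq with h | h
    · exact h
    · exfalso; rw [← h, mul_zero] at hMJ; linarith
  have : c * J ≤ M * J := by linarith
  exact (mul_le_mul_iff_of_pos_right hJpos).mp this
end

section
/- The N = 1/2 Levenshtein supremum inequality (Appendix D): For every real d with 0 < d ≤ (12π)^{1/6} and every real x with 0 < x < d, one has sin²(πx/d) / ((πx/d)²·(1 − (x/d)²)) ≤ 1 + (sin(d·x) − d·x)/(2π). Equivalently, the quotient f(x/d)/f̂(xd) of the one-dimensional Levenshtein function f(x) = sin²(πx)/(π²x²(1−x²)) and its Fourier transform f̂(x) = (4π + 2 sin x − 2x)/(4√(2π³)) for x < 2π attains its supremum over [0,d] at x = 0. -/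
open Real

private lemma aux_sub_cube_le_sin : ∀ y : ℝ, 0 ≤ y → y - y ^ 3 / 6 ≤ Real.sin y := by
  have hder : ∀ y : ℝ, HasDerivAt (fun y : ℝ => Real.sin y - (y - y ^ 3 / 6))
      (Real.cos y - (1 - y ^ 2 / 2)) y := by
    intro y
    have h2 : HasDerivAt (fun y : ℝ => y - y ^ 3 / 6) (1 - y ^ 2 / 2) y := by
      have h3 := (hasDerivAt_id y).sub ((hasDerivAt_pow 3 y).div_const 6)
      refine h3.congr_deriv ?_
      push_cast; ring
    exact (Real.hasDerivAt_sin y).sub h2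
  have h : Monotone (fun y : ℝ => Real.sin y - (y - y ^ 3 / 6)) := by
    apply monotone_of_deriv_nonneg (fun y => (hder y).differentiableAt)
    intro y
    rw [(hder y).deriv]
    have := Real.one_sub_sq_div_two_le_cos (x := y)
    linarith
  intro y hy
  have h0 := h hy
  norm_num at h0
  linarith

private lemma aux_cos_le : ∀ y : ℝ, 0 ≤ y → Real.cos y ≤ 1 - y ^ 2 / 2 + y ^ 4 / 24 := by
  have hder : ∀ y : ℝ, HasDerivAt (fun y : ℝ => (1 - y ^ 2 / 2 + y ^ 4 / 24) - Real.cos y)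
      ((-y + y ^ 3 / 6) + Real.sin y) y := by
    intro y
    have h2 : HasDerivAt (fun y : ℝ => 1 - y ^ 2 / 2 + y ^ 4 / 24) (-y + y ^ 3 / 6) y := by
      have h3 := ((hasDerivAt_const y (1:ℝ)).sub ((hasDerivAt_pow 2 y).div_const 2)).add
        ((hasDerivAt_pow 4 y).div_const 24)
      refine h3.congr_deriv ?_
      push_cast; ring
    have := h2.sub (Real.hasDerivAt_cos y)
    refine this.congr_deriv ?_
    ring
  have h : MonotoneOn (fun y : ℝ => (1 - y ^ 2 / 2 + y ^ 4 / 24) - Real.cos y) (Set.Ici 0) := by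
    apply monotoneOn_of_deriv_nonneg (convex_Ici 0)
    · exact (Differentiable.continuous (fun y => (hder y).differentiableAt)).continuousOn
    · exact fun y _ => ((hder y).differentiableAt).differentiableWithinAt
    · intro y hy
      rw [interior_Ici] at hy
      rw [(hder y).deriv]
      have := aux_sub_cube_le_sin y hy.le
      linarith
  intro y hy
  have h0 := h Set.self_mem_Ici (Set.mem_Ici.mpr hy) hy
  norm_num at h0
  linarith

private lemma aux_sin_le : ∀ y : ℝ, 0 ≤ y →
    Real.sin y ≤ y - y ^ 3 / 6 + y ^ 5 / 120 := by
  have hder : ∀ y : ℝ, HasDerivAt (fun y : ℝ => (y - y ^ 3 / 6 + y ^ 5 / 120) - Real.sin y)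
      ((1 - y ^ 2 / 2 + y ^ 4 / 24) - Real.cos y) y := by
    intro y
    have h2 : HasDerivAt (fun y : ℝ => y - y ^ 3 / 6 + y ^ 5 / 120)
        (1 - y ^ 2 / 2 + y ^ 4 / 24) y := by
      have h3 := ((hasDerivAt_id y).sub ((hasDerivAt_pow 3 y).div_const 6)).add
        ((hasDerivAt_pow 5 y).div_const 120)
      refine h3.congr_deriv ?_
      push_cast; ring
    exact h2.sub (Real.hasDerivAt_sin y)
  have h : MonotoneOn (fun y : ℝ => (y - y ^ 3 / 6 + y ^ 5 / 120) - Real.sin y) (Set.Ici 0) := by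
    apply monotoneOn_of_deriv_nonneg (convex_Ici 0)
    · exact (Differentiable.continuous (fun y => (hder y).differentiableAt)).continuousOn
    · exact fun y _ => ((hder y).differentiableAt).differentiableWithinAt
    · intro y hy
      rw [interior_Ici] at hy
      rw [(hder y).deriv]
      have := aux_cos_le y hy.le
      linarith
  intro y hy
  have h0 := h Set.self_mem_Ici (Set.mem_Ici.mpr hy) hy
  norm_num at h0
  linarith

/-- `sin (π t) ≤ π t (1 - t²)` on `(0,1)`. -/
private lemma aux_sin_pi_le (t : ℝ) (ht0 : 0 < t) (ht1 : t < 1) :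
    Real.sin (π * t) ≤ π * t * (1 - t ^ 2) := by
  have hpi := Real.pi_gt_d6
  have hpi' := Real.pi_lt_d2
  have hpi0 := Real.pi_pos
  rcases le_or_gt t (4/5) with h | h
  · have hb := aux_sin_le (π * t) (by positivity)
    have ht2 : t ^ 2 ≤ 16 / 25 := by nlinarith
    have ha1 : π ^ 2 < 9.9225 := by nlinarith
    have ha2 : (9.8696 : ℝ) < π ^ 2 := by nlinarith
    have h4 : π ^ 4 < 98.46 := by nlinarith [mul_lt_mul_of_pos_left ha1 (by positivity : (0:ℝ) < π ^ 2)]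
    have hkey : π ^ 5 * (16 / 25) ≤ (π ^ 3 / 6 - π) * 120 := by
      nlinarith [mul_lt_mul_of_pos_left h4 hpi0, mul_lt_mul_of_pos_left ha2 hpi0]
    have key : (π * t) ^ 5 / 120 ≤ (π ^ 3 / 6 - π) * t ^ 3 := by
      have h3 : (0:ℝ) < t ^ 3 := by positivity
      have hle : π ^ 5 * t ^ 2 ≤ π ^ 5 * (16 / 25) :=
        mul_le_mul_of_nonneg_left ht2 (by positivity)
      have hcomb : π ^ 5 * t ^ 2 ≤ (π ^ 3 / 6 - π) * 120 := hle.trans hkey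
      calc (π * t) ^ 5 / 120 = (π ^ 5 * t ^ 2) * t ^ 3 / 120 := by ring
        _ ≤ ((π ^ 3 / 6 - π) * 120) * t ^ 3 / 120 := by
            apply div_le_div_of_nonneg_right _ (by norm_num)
            exact mul_le_mul_of_nonneg_right hcomb h3.le
        _ = (π ^ 3 / 6 - π) * t ^ 3 := by ring
    calc Real.sin (π * t) ≤ π * t - (π * t) ^ 3 / 6 + (π * t) ^ 5 / 120 := hb
      _ ≤ π * t - (π * t) ^ 3 / 6 + (π ^ 3 / 6 - π) * t ^ 3 := by linarith
      _ = π * t * (1 - t ^ 2) := by ring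
  · have hsymm : Real.sin (π * t) = Real.sin (π * (1 - t)) := by
      rw [show π * (1 - t) = π - π * t by ring, Real.sin_pi_sub]
    have hle : Real.sin (π * t) ≤ π * (1 - t) := by
      rw [hsymm]; exact Real.sin_le (by nlinarith)
    have hq : (0:ℝ) ≤ t * (1 + t) - 1 := by nlinarith
    have : π * (1 - t) ≤ π * t * (1 - t ^ 2) := by
      nlinarith [mul_nonneg (mul_nonneg hpi0.le (by linarith : (0:ℝ) ≤ 1 - t)) hq]
    linarith

/-- The N = 1/2 Levenshtein supremum inequality (Appendix D): for
`0 < d ≤ (12π)^{1/6}` and `0 < x < d`, the quotient of the one-dimensional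
Levenshtein function and its Fourier transform is maximized at the origin. -/
theorem levenshtein_half_sup (d : ℝ) (hd : 0 < d) (hd' : d ≤ (12 * π) ^ ((1 : ℝ) / 6))
    (x : ℝ) (hx : 0 < x) (hxd : x < d) :
    Real.sin (π * x / d) ^ 2 / ((π * x / d) ^ 2 * (1 - (x / d) ^ 2)) ≤
      1 + (Real.sin (d * x) - d * x) / (2 * π) := by
  have hpi := Real.pi_pos
  set t : ℝ := x / d with ht
  have ht0 : 0 < t := div_pos hx hd
  have ht1 : t < 1 := (div_lt_one hd).mpr hxd
  have hrw : π * x / d = π * t := by rw [ht]; field_simp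
  have hsin_nonneg : 0 ≤ Real.sin (π * t) :=
    Real.sin_nonneg_of_nonneg_of_le_pi (by positivity) (by nlinarith)
  -- Step A : LHS ≤ 1 - t²
  have hA : Real.sin (π * t) ^ 2 / ((π * t) ^ 2 * (1 - t ^ 2)) ≤ 1 - t ^ 2 := by
    have h1t : (0:ℝ) < 1 - t ^ 2 := by nlinarith
    have hden : 0 < (π * t) ^ 2 * (1 - t ^ 2) := by positivity
    rw [div_le_iff₀ hden]
    have := aux_sin_pi_le t ht0 ht1
    nlinarith [sq_nonneg (Real.sin (π * t))]
  -- Step B : d⁶ ≤ 12 π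
  have hd6 : d ^ 6 ≤ 12 * π := by
    have h12 : (0:ℝ) < 12 * π := by positivity
    calc d ^ 6 ≤ ((12 * π) ^ ((1:ℝ)/6)) ^ 6 := pow_le_pow_left₀ hd.le hd' 6
      _ = 12 * π := by
          rw [← Real.rpow_natCast ((12*π) ^ ((1:ℝ)/6)) 6, ← Real.rpow_mul h12.le]
          norm_num
  -- Step C : d x - sin(d x) ≤ 2 π t²
  have hB : d * x - Real.sin (d * x) ≤ 2 * π * t ^ 2 := by
    have h1 := aux_sub_cube_le_sin (d * x) (by positivity)
    have h2 : (d * x) ^ 3 / 6 ≤ 2 * π * t ^ 2 := by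
      have ht2 : t ^ 2 = x ^ 2 / d ^ 2 := by rw [ht]; ring
      rw [ht2, show 2 * π * (x ^ 2 / d ^ 2) = 2 * π * x ^ 2 / d ^ 2 by ring,
        div_le_div_iff₀ (by norm_num) (by positivity)]
      have hx5 : d ^ 5 * x ≤ d ^ 6 := by
        calc d ^ 5 * x ≤ d ^ 5 * d := mul_le_mul_of_nonneg_left hxd.le (by positivity)
          _ = d ^ 6 := by ring
      calc (d * x) ^ 3 * d ^ 2 = (d ^ 5 * x) * x ^ 2 := by ring
        _ ≤ (12 * π) * x ^ 2 := mul_le_mul_of_nonneg_right (hx5.trans hd6) (sq_nonneg x)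
        _ = 2 * π * x ^ 2 * 6 := by ring
    linarith
  rw [hrw]
  have h2pi : (0:ℝ) < 2 * π := by positivity
  have hfinal : -(t ^ 2) ≤ (Real.sin (d * x) - d * x) / (2 * π) := by
    rw [le_div_iff₀ h2pi]
    nlinarith
  linarith
end
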